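/- Let q = 2^m with m even, m not divisible by 3 and not divisible by 5. There is no integer d with 1 ≤ d < q^2−1 and gcd(d, q^2−1) = 1 such that the multisets {11, 4q+7, 10q+1} and {7d, (5q+2)d, 7qd} coincide modulo q^2−1. -/
import Mathlib

private lemma final_contra (m q N c : ℕ) (hm : 0 < m) (hme : Even m)
    (hq : q = 2 ^ m) (hN : N = q ^ 2 - 1)
    (hc : c = 1 ∨ c = 3 ∨ c = 7 ∨ c = 9 ∨ c = 11)
    (h : c * q ≡ c [MOD N]) : False := by
  have hm2 : 2 ≤ m := by rcases hme with ⟨k, hk⟩; omega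
  have hq4 : 4 ≤ q := by
    rw [hq]
    calc 4 = 2 ^ 2 := by norm_num
    _ ≤ 2 ^ m := Nat.pow_le_pow_right (by norm_num) hm2
  obtain ⟨n, rfl⟩ : ∃ n, q = n + 1 := ⟨q - 1, by omega⟩
  have hNe : N = n * (n + 2) := by
    rw [hN]
    have h2 : (n + 1) ^ 2 = n * (n + 2) + 1 := by ring
    omega
  have hd : N ∣ c * (n + 1) - c :=
    (Nat.modEq_iff_dvd' (Nat.le_mul_of_pos_right c (by omega))).mp h.symm
  have heq : c * (n + 1) - c = n * c := by
    have : c * (n + 1) = n * c + c := by ring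
    omega
  rw [heq, hNe] at hd
  have hc0 : 0 < c := by rcases hc with rfl|rfl|rfl|rfl|rfl <;> norm_num
  have hc11 : c ≤ 11 := by rcases hc with rfl|rfl|rfl|rfl|rfl <;> norm_num
  have hdc : (n + 2) ∣ c := (Nat.mul_dvd_mul_iff_left (show 0 < n by omega)).mp hd
  have hle : n + 2 ≤ 11 := le_trans (Nat.le_of_dvd hc0 hdc) hc11
  have hmlt : m < 4 := by
    by_contra hcon
    have : 2 ^ 4 ≤ 2 ^ m := Nat.pow_le_pow_right (by norm_num) (by omega)
    omega
  interval_cases m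
  · -- m = 2, q = 4, n = 3
    have hn : n = 3 := by omega
    subst hn
    rcases hc with rfl|rfl|rfl|rfl|rfl <;> omega
  · exact (by decide : ¬ Even 3) hme

theorem stmt_12 (m q : ℕ) (hm : 0 < m) (hme : Even m) (hm3 : ¬ (3 ∣ m)) (hm5 : ¬ (5 ∣ m))
    (hq : q = 2 ^ m) :
    ¬ ∃ d : ℕ, 1 ≤ d ∧ d < q ^ 2 - 1 ∧ Nat.gcd d (q ^ 2 - 1) = 1 ∧
      Multiset.map (· % (q ^ 2 - 1)) ({11, 4 * q + 7, 10 * q + 1} : Multiset ℕ) =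
        Multiset.map (· % (q ^ 2 - 1))
          ({7 * d, (5 * q + 2) * d, 7 * q * d} : Multiset ℕ) := by
  rintro ⟨d, hd1, hd2, hgcd, hmul⟩
  set N := q ^ 2 - 1 with hNdef
  have hm2 : 2 ≤ m := by rcases hme with ⟨k, hk⟩; omega
  have hq4 : 4 ≤ q := by
    rw [hq]
    calc 4 = 2 ^ 2 := by norm_num
    _ ≤ 2 ^ m := Nat.pow_le_pow_right (by norm_num) hm2
  have hq2N : q ^ 2 = N + 1 := by
    have : 16 ≤ q ^ 2 := by nlinarith
    omega
  have hmodq2 : q ^ 2 ≡ 1 [MOD N] := by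
    have : (1 : ℕ) ≡ q ^ 2 [MOD N] :=
      (Nat.modEq_iff_dvd' (by omega)).mpr ⟨1, by omega⟩
    exact this.symm
  have hq2 := (ZMod.natCast_eq_natCast_iff (q ^ 2) 1 N).mpr hmodq2
  push_cast at hq2
  have hin1 : (7 * d) % N ∈ Multiset.map (· % N) ({11, 4 * q + 7, 10 * q + 1} : Multiset ℕ) := by
    rw [hmul]
    exact Multiset.mem_map_of_mem _ (by simp)
  have hin2 : (7 * q * d) % N ∈ Multiset.map (· % N) ({11, 4 * q + 7, 10 * q + 1} : Multiset ℕ) := by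
    rw [hmul]
    exact Multiset.mem_map_of_mem _ (by simp)
  simp only [Multiset.insert_eq_cons, Multiset.map_cons, Multiset.map_singleton,
    Multiset.mem_cons, Multiset.mem_singleton] at hin1 hin2
  rcases hin1 with h1|h1|h1 <;> rcases hin2 with h2|h2|h2
  · have h1z := (ZMod.natCast_eq_natCast_iff _ _ N).mpr h1
    have h2z := (ZMod.natCast_eq_natCast_iff _ _ N).mpr h2
    push_cast at h1z h2z
    refine final_contra m q N 11 hm hme hq hNdef (by norm_num) ?_
    refine (ZMod.natCast_eq_natCast_iff (11 * q) 11 N).mp ?_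
    push_cast
    linear_combination (-(q : ZMod N)) * h1z + h2z
  · have h1z := (ZMod.natCast_eq_natCast_iff _ _ N).mpr h1
    have h2z := (ZMod.natCast_eq_natCast_iff _ _ N).mpr h2
    push_cast at h1z h2z
    refine final_contra m q N 7 hm hme hq hNdef (by norm_num) ?_
    refine (ZMod.natCast_eq_natCast_iff (7 * q) 7 N).mp ?_
    push_cast
    linear_combination (-(q : ZMod N)) * h1z + h2z
  · have h1z := (ZMod.natCast_eq_natCast_iff _ _ N).mpr h1
    have h2z := (ZMod.natCast_eq_natCast_iff _ _ N).mpr h2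
    push_cast at h1z h2z
    refine final_contra m q N 1 hm hme hq hNdef (by norm_num) ?_
    refine (ZMod.natCast_eq_natCast_iff (1 * q) 1 N).mp ?_
    push_cast
    linear_combination (-(q : ZMod N)) * h1z + h2z
  · have h1z := (ZMod.natCast_eq_natCast_iff _ _ N).mpr h1
    have h2z := (ZMod.natCast_eq_natCast_iff _ _ N).mpr h2
    push_cast at h1z h2z
    refine final_contra m q N 7 hm hme hq hNdef (by norm_num) ?_
    refine (ZMod.natCast_eq_natCast_iff (7 * q) 7 N).mp ?_
    push_cast
    linear_combination (-(q : ZMod N)) * h1z + h2z - 4 * hq2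
  · have h1z := (ZMod.natCast_eq_natCast_iff _ _ N).mpr h1
    have h2z := (ZMod.natCast_eq_natCast_iff _ _ N).mpr h2
    push_cast at h1z h2z
    refine final_contra m q N 3 hm hme hq hNdef (by norm_num) ?_
    refine (ZMod.natCast_eq_natCast_iff (3 * q) 3 N).mp ?_
    push_cast
    linear_combination (-(q : ZMod N)) * h1z + h2z - 4 * hq2
  · have h1z := (ZMod.natCast_eq_natCast_iff _ _ N).mpr h1
    have h2z := (ZMod.natCast_eq_natCast_iff _ _ N).mpr h2
    push_cast at h1z h2z
    refine final_contra m q N 3 hm hme hq hNdef (by norm_num) ?_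
    refine (ZMod.natCast_eq_natCast_iff (3 * q) 3 N).mp ?_
    push_cast
    linear_combination (q : ZMod N) * h1z - h2z + 4 * hq2
  · have h1z := (ZMod.natCast_eq_natCast_iff _ _ N).mpr h1
    have h2z := (ZMod.natCast_eq_natCast_iff _ _ N).mpr h2
    push_cast at h1z h2z
    refine final_contra m q N 1 hm hme hq hNdef (by norm_num) ?_
    refine (ZMod.natCast_eq_natCast_iff (1 * q) 1 N).mp ?_
    push_cast
    linear_combination (-(q : ZMod N)) * h1z + h2z - 10 * hq2
  · have h1z := (ZMod.natCast_eq_natCast_iff _ _ N).mpr h1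
    have h2z := (ZMod.natCast_eq_natCast_iff _ _ N).mpr h2
    push_cast at h1z h2z
    refine final_contra m q N 3 hm hme hq hNdef (by norm_num) ?_
    refine (ZMod.natCast_eq_natCast_iff (3 * q) 3 N).mp ?_
    push_cast
    linear_combination (q : ZMod N) * h1z - h2z + 10 * hq2
  · have h1z := (ZMod.natCast_eq_natCast_iff _ _ N).mpr h1
    have h2z := (ZMod.natCast_eq_natCast_iff _ _ N).mpr h2
    push_cast at h1z h2z
    refine final_contra m q N 9 hm hme hq hNdef (by norm_num) ?_
    refine (ZMod.natCast_eq_natCast_iff (9 * q) 9 N).mp ?_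
    push_cast
    linear_combination (q : ZMod N) * h1z - h2z + 10 * hq2
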